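/- Let f : [0,∞) → ℝ be continuously differentiable with limsup_{t→∞} f(t) = ∞. Then for every M > 0 there exist x > M and t ≥ 0 such that (a) f(s) < f(t) = x for all 0 ≤ s < t, and (b) f′(t) > 0. -/

import Mathlib

open Set Filter MeasureTheory

/-- Sard for ℝ: the image of the critical set is null. -/
lemma crit_null (f f' : ℝ → ℝ)
    (hderiv : ∀ t ∈ Set.Ici (0 : ℝ), HasDerivWithinAt f (f' t) (Set.Ici (0 : ℝ)) t) :
    volume (f '' {t : ℝ | 0 ≤ t ∧ f' t = 0}) = 0 := by
  set S : Set ℝ := {t : ℝ | 0 ≤ t ∧ f' t = 0} with hS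
  have hsub : S ⊆ Set.Ici (0 : ℝ) := fun t ht => ht.1
  have := MeasureTheory.addHaar_image_eq_zero_of_det_fderivWithin_eq_zero
    (μ := volume) (f := f) (s := S)
    (f' := fun t => ContinuousLinearMap.smulRight (1 : ℝ →L[ℝ] ℝ) (f' t))
    (fun t ht => ((hderiv t (hsub ht)).hasFDerivWithinAt).mono hsub)
    (fun t ht => by
      have h0 : f' t = 0 := ht.2
      have h1 : ContinuousLinearMap.smulRight (1 : ℝ →L[ℝ] ℝ) (f' t) = 0 := by
        ext; simp [h0]
      rw [h1, ContinuousLinearMap.det]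
      rw [ContinuousLinearMap.coe_zero]
      exact LinearMap.det_zero' (Module.Basis.singleton Unit ℝ))
  simpa using this

/-- Let `f : [0,∞) → ℝ` be continuously differentiable (with derivative `f'`)
with `limsup_{t→∞} f(t) = ∞` (i.e. `f` frequently exceeds any level). Then for every `M > 0`
there exist `x > M` and `t ≥ 0` such that (a) `f(s) < f(t) = x` for all `0 ≤ s < t`, and
(b) `f'(t) > 0`. -/
theorem statement0 (f f' : ℝ → ℝ)
    (hderiv : ∀ t ∈ Set.Ici (0 : ℝ), HasDerivWithinAt f (f' t) (Set.Ici (0 : ℝ)) t)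
    (hcont : ContinuousOn f' (Set.Ici (0 : ℝ)))
    (hlimsup : ∀ C : ℝ, ∃ᶠ t in Filter.atTop, C < f t) :
    ∀ M > (0 : ℝ), ∃ x > M, ∃ t ≥ (0 : ℝ),
      (∀ s, 0 ≤ s → s < t → f s < f t) ∧ f t = x ∧ 0 < f' t := by
  intro M hM
  have hfc : ContinuousOn f (Set.Ici 0) := fun t ht => (hderiv t ht).continuousWithinAt
  set K : ℝ := max M (f 0) with hK
  -- pick a regular value c > K
  have hnull := crit_null f f' hderiv
  have hne : (Set.Ioi K \ f '' {t : ℝ | 0 ≤ t ∧ f' t = 0}).Nonempty := by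
    by_contra h
    rw [Set.not_nonempty_iff_eq_empty, Set.diff_eq_empty] at h
    have := measure_mono (μ := volume) h
    rw [hnull] at this
    simp [Real.volume_Ioi] at this
  obtain ⟨c, hcK, hcrit⟩ := hne
  have hcK : K < c := hcK
  -- first hitting time of level c
  set A : Set ℝ := {s : ℝ | 0 ≤ s ∧ c ≤ f s} with hA
  have hAne : A.Nonempty := by
    obtain ⟨t, ht0, htc⟩ := ((hlimsup c).and_eventually (eventually_ge_atTop (0:ℝ))).exists
    exact ⟨t, htc, ht0.le⟩
  have hAbdd : BddBelow A := ⟨0, fun s hs => hs.1⟩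
  have hAclosed : IsClosed A := by
    have : A = Set.Ici 0 ∩ f ⁻¹' Set.Ici c := by
      ext s; simp [hA, Set.mem_setOf_eq, and_comm]
    rw [this]
    exact (hfc.preimage_isClosed_of_isClosed isClosed_Ici isClosed_Ici)
  set t : ℝ := sInf A with ht
  have htA : t ∈ A := hAclosed.csInf_mem hAne hAbdd
  have ht0 : 0 ≤ t := htA.1
  have hlt : ∀ s, 0 ≤ s → s < t → f s < c := by
    intro s hs hst
    by_contra h
    push_neg at h
    exact absurd (csInf_le hAbdd ⟨hs, h⟩) (not_le.mpr hst)
  have htpos : 0 < t := by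
    rcases lt_or_eq_of_le ht0 with h | h
    · exact h
    · exfalso
      have : c ≤ f 0 := by rw [← h] at htA; exact htA.2
      exact absurd (lt_of_le_of_lt (le_max_right M (f 0)) hcK) (not_lt.mpr this)
  -- limit from the left: f t ≤ c
  have hmemcl : t ∈ closure (Set.Ico 0 t) := by
    rw [closure_Ico (ne_of_lt htpos)]
    exact ⟨ht0, le_refl t⟩
  have hNB : (nhdsWithin t (Set.Ico 0 t)).NeBot :=
    mem_closure_iff_nhdsWithin_neBot.mp hmemcl
  have hftle : f t ≤ c := by
    have htend : Tendsto f (nhdsWithin t (Set.Ico 0 t)) (nhds (f t)) :=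
      ((hfc t htA.1).mono (Set.Ico_subset_Ici_self)).tendsto
    refine le_of_tendsto htend (eventually_nhdsWithin_of_forall ?_)
    intro s hs
    exact (hlt s hs.1 hs.2).le
  have hfteq : f t = c := le_antisymm hftle htA.2
  -- f' t ≥ 0 via slopes from the left
  have hslope : Tendsto (slope f t) (nhdsWithin t (Set.Ici 0 \ {t})) (nhds (f' t)) :=
    (hasDerivWithinAt_iff_tendsto_slope).mp (hderiv t ht0)
  have hsub2 : Set.Ico 0 t ⊆ Set.Ici 0 \ {t} := fun s hs =>
    ⟨hs.1, fun h => absurd (h ▸ hs.2) (lt_irrefl t)⟩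
  have hslope2 : Tendsto (slope f t) (nhdsWithin t (Set.Ico 0 t)) (nhds (f' t)) :=
    hslope.mono_left (nhdsWithin_mono t hsub2)
  have hge : 0 ≤ f' t := by
    refine ge_of_tendsto hslope2 (eventually_nhdsWithin_of_forall ?_)
    intro s hs
    have h1 : f s < f t := hfteq ▸ hlt s hs.1 hs.2
    have h2 : s - t < 0 := sub_neg.mpr hs.2
    rw [slope_def_field]
    have h3 : (0:ℝ) < t - s := sub_pos.mpr hs.2
    have h4 : (0:ℝ) < f t - f s := sub_pos.mpr h1
    rw [show f s - f t = -(f t - f s) by ring, show s - t = -(t - s) by ring,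
      neg_div_neg_eq]
    exact (div_pos h4 h3).le
  have hne0 : f' t ≠ 0 := by
    intro h
    exact hcrit ⟨t, ⟨ht0, h⟩, hfteq⟩
  refine ⟨c, lt_of_le_of_lt (le_max_left M (f 0)) hcK, t, ht0, ?_, hfteq, lt_of_le_of_ne hge (Ne.symm hne0)⟩
  intro s hs hst
  exact hfteq ▸ hlt s hs hst
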